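/- Branch point lemma for the special hypertree family (Lemma 7.4): Fix an integer r ≥ 2 and ℓ ≥ 1, and let 𝒯_ℓ be the family of rooted r-uniform hypertrees defined below. If α, β ∈ 𝒯_ℓ are distinct with α ∩ β ≠ ∅ (they share at least one edge), and the number of branch points b = |V(α △ β) ∩ V(γ)| equals 1, where γ = (α ∩ β) ∪ {1} is the core, then necessarily a = |α ∩ β| ≥ ℓ. -/

import Mathlib

/-- The type of hyperedges: r-element subsets of [n]. -/
abbrev HEdge (n r : ℕ) := {s : Finset (Fin n) // s.card = r}

/-- The vertex set of a hypergraph (a finite set of hyperedges). -/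
def vset {n r : ℕ} (T : Finset (HEdge n r)) : Finset (Fin n) :=
  T.biUnion fun e => e.1

/-- A hypergraph is connected: any two of its (covered) vertices are joined by a
chain of pairwise-intersecting edges of T. -/
def HConnected {n r : ℕ} (T : Finset (HEdge n r)) : Prop :=
  ∀ u v : Fin n, u ∈ vset T → v ∈ vset T →
    ∃ (p : ℕ) (c : Fin (p + 1) → HEdge n r),
      (∀ j, c j ∈ T) ∧ u ∈ (c 0).1 ∧ v ∈ (c (Fin.last p)).1 ∧
      ∀ j : Fin p, ∃ w : Fin n, w ∈ (c j.castSucc).1 ∧ w ∈ (c j.succ).1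

/-- An r-uniform hypertree: a nonempty connected r-uniform hypergraph with the
minimum possible number of edges, (r−1)|E| + 1 = |V|.  (This is equivalent to being
built from a single hyperedge by repeatedly appending a hyperedge sharing exactly
one vertex with the current hypergraph.) -/
def IsHypertree {n r : ℕ} (T : Finset (HEdge n r)) : Prop :=
  T.Nonempty ∧ HConnected T ∧ (r - 1) * T.card + 1 = (vset T).card

/-- Membership in the family 𝒯_ℓ of rooted hypertrees: α is a hypertree rooted at
`root` of the following shape.  There are two distinct root-incident edges e₁, e₂
meeting only at the root, and two vertex-disjoint hypertrees T₁, T₂ with ℓ edges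
each, not containing the root; e₁ meets T₁ in exactly one vertex and avoids T₂, e₂
meets T₂ in exactly one vertex and avoids T₁, and α = {e₁, e₂} ∪ T₁ ∪ T₂.  Thus the
root has degree two, in each root-incident edge exactly one of the r−1 non-root
vertices has degree ≥ 2 in α, and deleting the root together with the 2(r−2)
degree-one vertices of the root-incident edges decomposes α into two disjoint
hypertrees with ℓ edges each. -/
def InTreeFam {n r : ℕ} (root : Fin n) (l : ℕ) (α : Finset (HEdge n r)) : Prop :=
  IsHypertree α ∧
  ∃ (e₁ e₂ : HEdge n r) (T₁ T₂ : Finset (HEdge n r)),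
    α = insert e₁ (insert e₂ (T₁ ∪ T₂)) ∧ e₁ ≠ e₂ ∧
    e₁ ∉ T₁ ∪ T₂ ∧ e₂ ∉ T₁ ∪ T₂ ∧ Disjoint T₁ T₂ ∧
    IsHypertree T₁ ∧ IsHypertree T₂ ∧ T₁.card = l ∧ T₂.card = l ∧
    root ∈ e₁.1 ∧ root ∈ e₂.1 ∧ e₁.1 ∩ e₂.1 = {root} ∧
    root ∉ vset T₁ ∧ root ∉ vset T₂ ∧ Disjoint (vset T₁) (vset T₂) ∧
    (e₁.1 ∩ vset T₁).card = 1 ∧ e₁.1 ∩ vset T₂ = ∅ ∧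
    (e₂.1 ∩ vset T₂).card = 1 ∧ e₂.1 ∩ vset T₁ = ∅

/-- Number of connected components of a hypergraph given by its edge set. -/
noncomputable def numComponents {n r : ℕ} (γ : Finset (HEdge n r)) : ℕ :=
  Nat.card (Quot fun e e' : {x : HEdge n r // x ∈ γ} => ¬ Disjoint e.1.1 e'.1.1)

/-- Number of connected components of the core γ = (α∩β) ∪ {root}: vertex `root`
counts as an extra component when it is isolated in α∩β. -/
noncomputable def coreComponents {n r : ℕ} (root : Fin n)
    (γ : Finset (HEdge n r)) : ℕ :=
  numComponents γ + (if root ∈ vset γ then 0 else 1)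

/-- The vertex set of the core γ = (α∩β) ∪ {root}. -/
def coreVset {n r : ℕ} (root : Fin n) (γ : Finset (HEdge n r)) : Finset (Fin n) :=
  insert root (vset γ)

section AuxBranch

variable {n r : ℕ}

/-- Two edges of `T` that share a vertex. -/
def Step (T : Finset (HEdge n r)) (a b : HEdge n r) : Prop :=
  a ∈ T ∧ b ∈ T ∧ ¬ Disjoint a.1 b.1

lemma step_symm (T : Finset (HEdge n r)) : Symmetric (Step T) := by
  rintro a b ⟨ha, hb, hd⟩
  exact ⟨hb, ha, fun h => hd h.symm⟩

lemma reach_mono {T T' : Finset (HEdge n r)} (h : T ⊆ T') {a b : HEdge n r}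
    (hr : Relation.ReflTransGen (Step T) a b) :
    Relation.ReflTransGen (Step T') a b :=
  Relation.ReflTransGen.mono (r := Step T) (p := Step T')
    (fun _ _ ⟨hx, hy, hd⟩ => ⟨h hx, h hy, hd⟩) a b hr

/-- Along a chain from a `β`-edge to a non-`β`-edge, there must be a flip. -/
lemma flip_lemma {T β : Finset (HEdge n r)} {h g : HEdge n r}
    (hreach : Relation.ReflTransGen (Step T) h g) (hh : h ∈ β) (hg : g ∉ β) :
    ∃ c d, Step T c d ∧ c ∈ β ∧ d ∉ β := by
  induction hreach with
  | refl => exact absurd hh hg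
  | @tail m g' _ hstep ih =>
    by_cases hm : m ∈ β
    · exact ⟨m, g', hstep, hm, hg⟩
    · exact ih hm

lemma conn_reach {T : Finset (HEdge n r)} (hc : HConnected T) (hr0 : 0 < r)
    {e e' : HEdge n r} (he : e ∈ T) (he' : e' ∈ T) :
    Relation.ReflTransGen (Step T) e e' := by
  obtain ⟨u, hu⟩ := Finset.card_pos.mp (e.2 ▸ hr0)
  obtain ⟨v, hv⟩ := Finset.card_pos.mp (e'.2 ▸ hr0)
  obtain ⟨p, c, hcT, hu0, hvl, hstep⟩ := hc u v
    (Finset.mem_biUnion.mpr ⟨e, he, hu⟩) (Finset.mem_biUnion.mpr ⟨e', he', hv⟩)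
  have key : ∀ m : ℕ, ∀ hm : m < p + 1,
      Relation.ReflTransGen (Step T) (c 0) (c ⟨m, hm⟩) := by
    intro m
    induction m with
    | zero => intro hm; exact Relation.ReflTransGen.refl
    | succ k ih =>
      intro hm
      have hk : k < p + 1 := Nat.lt_of_succ_lt hm
      have hkp : k < p := Nat.lt_of_succ_lt_succ hm
      obtain ⟨w, hw1, hw2⟩ := hstep ⟨k, hkp⟩
      exact (ih hk).tail ⟨hcT _, hcT _,
        fun hd => (Finset.disjoint_left.mp hd hw1) hw2⟩
  have h1 : Relation.ReflTransGen (Step T) e (c 0) :=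
    Relation.ReflTransGen.single
      ⟨he, hcT 0, fun hd => (Finset.disjoint_left.mp hd hu) hu0⟩
  have h2 : Relation.ReflTransGen (Step T) (c 0) (c (Fin.last p)) :=
    key p (Nat.lt_succ_self p)
  exact (h1.trans h2).tail
    ⟨hcT _, he', fun hd => (Finset.disjoint_left.mp hd hvl) hv⟩

lemma side_reach {T : Finset (HEdge n r)} (hT : IsHypertree T) (hr0 : 0 < r)
    {e : HEdge n r} (hmeet : (e.1 ∩ vset T).Nonempty)
    {a b : HEdge n r} (ha : a ∈ insert e T) (hb : b ∈ insert e T) :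
    Relation.ReflTransGen (Step (insert e T)) a b := by
  obtain ⟨w, hw⟩ := hmeet
  have hwe : w ∈ e.1 := (Finset.mem_inter.mp hw).1
  have hwT : w ∈ vset T := (Finset.mem_inter.mp hw).2
  obtain ⟨t₀, ht₀, hwt₀⟩ := Finset.mem_biUnion.mp hwT
  have hsub : T ⊆ insert e T := Finset.subset_insert _ _
  have hre : ∀ t ∈ T, Relation.ReflTransGen (Step (insert e T)) e t := by
    intro t ht
    exact Relation.ReflTransGen.head
      ⟨Finset.mem_insert_self _ _, hsub ht₀,
        fun hd => (Finset.disjoint_left.mp hd hwe) hwt₀⟩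
      (reach_mono hsub (conn_reach hT.2.1 hr0 ht₀ ht))
  have hsymm : Symmetric (Relation.ReflTransGen (Step (insert e T))) :=
    by haveI : Std.Symm (Step (insert e T)) := ⟨fun _ _ hxy => step_symm _ hxy⟩
       exact fun x y hxy => Std.Symm.symm (r := Relation.ReflTransGen (Step (insert e T))) x y hxy
  rcases Finset.mem_insert.mp ha with ha' | ha'
  · rcases Finset.mem_insert.mp hb with hb' | hb'
    · subst ha'; subst hb'; exact Relation.ReflTransGen.refl
    · subst ha'; exact hre b hb'
  · rcases Finset.mem_insert.mp hb with hb' | hb'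
    · subst hb'; exact hsymm (hre a ha')
    · exact reach_mono hsub (conn_reach hT.2.1 hr0 ha' hb')

/-- If one side `{e} ∪ T` of the tree contains both a shared and an unshared
edge, then there is a branch point inside `vset T`. -/
lemma side_branch {α β : Finset (HEdge n r)} (hr0 : 0 < r)
    {e : HEdge n r} {T : Finset (HEdge n r)} (hT : IsHypertree T)
    (hmeet : (e.1 ∩ vset T).Nonempty) (hsub : insert e T ⊆ α)
    {h g : HEdge n r} (hh : h ∈ insert e T) (hhβ : h ∈ β)
    (hg : g ∈ insert e T) (hgβ : g ∉ β) :
    ∃ w, w ∈ vset T ∧ w ∈ vset ((α \ β) ∪ (β \ α)) ∧ w ∈ vset (α ∩ β) := by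
  obtain ⟨c, d, ⟨hcS, hdS, hcd⟩, hcβ, hdβ⟩ :=
    flip_lemma (side_reach hT hr0 hmeet hh hg) hhβ hgβ
  obtain ⟨w, hwc, hwd⟩ := Finset.not_disjoint_iff.mp hcd
  refine ⟨w, ?_, ?_, ?_⟩
  · rcases Finset.mem_insert.mp hdS with hd' | hd'
    · rcases Finset.mem_insert.mp hcS with hc' | hc'
      · subst hc'; subst hd'; exact absurd hcβ hdβ
      · exact Finset.mem_biUnion.mpr ⟨c, hc', hwc⟩
    · exact Finset.mem_biUnion.mpr ⟨d, hd', hwd⟩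
  · exact Finset.mem_biUnion.mpr
      ⟨d, Finset.mem_union_left _ (Finset.mem_sdiff.mpr ⟨hsub hdS, hdβ⟩), hwd⟩
  · exact Finset.mem_biUnion.mpr
      ⟨c, Finset.mem_inter.mpr ⟨hsub hcS, hcβ⟩, hwc⟩

/-- Main auxiliary step: if both subtrees contain an unshared edge and one side
contains a shared edge, we obtain two distinct branch points, contradicting b = 1. -/
lemma main_aux {α β : Finset (HEdge n r)} (hr0 : 0 < r) (root : Fin n)
    (hb : (vset ((α \ β) ∪ (β \ α)) ∩ coreVset root (α ∩ β)).card = 1)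
    {e₁ e₂ : HEdge n r} {T₁ T₂ : Finset (HEdge n r)}
    (hT1 : IsHypertree T₁) (hT2 : IsHypertree T₂)
    (hm1 : (e₁.1 ∩ vset T₁).Nonempty) (hm2 : (e₂.1 ∩ vset T₂).Nonempty)
    (hs1 : insert e₁ T₁ ⊆ α) (hs2 : insert e₂ T₂ ⊆ α)
    (hroot2 : root ∈ e₂.1) (hrT1 : root ∉ vset T₁)
    (hdv : Disjoint (vset T₁) (vset T₂))
    {h : HEdge n r} (hh : h ∈ insert e₁ T₁) (hhβ : h ∈ β)
    {g₁ : HEdge n r} (hg1 : g₁ ∈ T₁) (hg1β : g₁ ∉ β)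
    {g₂ : HEdge n r} (hg2 : g₂ ∈ T₂) (hg2β : g₂ ∉ β) : False := by
  have hcard : (vset ((α \ β) ∪ (β \ α)) ∩ coreVset root (α ∩ β)).card ≤ 1 :=
    le_of_eq hb
  obtain ⟨w₁, hw₁T, hw₁Δ, hw₁i⟩ := side_branch hr0 hT1 hm1 hs1 hh hhβ
    (Finset.mem_insert.mpr (Or.inr hg1)) hg1β
  have hw₁B : w₁ ∈ vset ((α \ β) ∪ (β \ α)) ∩ coreVset root (α ∩ β) :=
    Finset.mem_inter.mpr ⟨hw₁Δ, Finset.mem_insert.mpr (Or.inr hw₁i)⟩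
  by_cases hc : ∃ h' ∈ insert e₂ T₂, h' ∈ β
  · obtain ⟨h', hh', hh'β⟩ := hc
    obtain ⟨w₂, hw₂T, hw₂Δ, hw₂i⟩ := side_branch hr0 hT2 hm2 hs2 hh' hh'β
      (Finset.mem_insert.mpr (Or.inr hg2)) hg2β
    have hw₂B : w₂ ∈ vset ((α \ β) ∪ (β \ α)) ∩ coreVset root (α ∩ β) :=
      Finset.mem_inter.mpr ⟨hw₂Δ, Finset.mem_insert.mpr (Or.inr hw₂i)⟩
    have hne : w₁ ≠ w₂ :=
      fun heq => (Finset.disjoint_left.mp hdv hw₁T) (heq ▸ hw₂T)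
    exact absurd hcard
      (not_le.mpr (Finset.one_lt_card.mpr ⟨w₁, hw₁B, w₂, hw₂B, hne⟩))
  · push_neg at hc
    have he₂β : e₂ ∉ β := hc e₂ (Finset.mem_insert_self _ _)
    have hrootΔ : root ∈ vset ((α \ β) ∪ (β \ α)) :=
      Finset.mem_biUnion.mpr ⟨e₂, Finset.mem_union_left _
        (Finset.mem_sdiff.mpr ⟨hs2 (Finset.mem_insert_self _ _), he₂β⟩), hroot2⟩
    have hrootB : root ∈ vset ((α \ β) ∪ (β \ α)) ∩ coreVset root (α ∩ β) :=
      Finset.mem_inter.mpr ⟨hrootΔ, Finset.mem_insert_self _ _⟩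
    have hne : root ≠ w₁ := fun heq => hrT1 (heq ▸ hw₁T)
    exact absurd hcard
      (not_le.mpr (Finset.one_lt_card.mpr ⟨root, hrootB, w₁, hw₁B, hne⟩))

end AuxBranch

/-- Lemma 7.4 (branch point lemma for the special hypertree family): if α, β ∈ 𝒯_ℓ
are distinct and share at least one edge, and the number of branch points
b = |V(α△β) ∩ V(γ)| equals 1 (where γ = (α∩β) ∪ {1} is the core), then
a = |α∩β| ≥ ℓ. -/
theorem branch_point_lemma (n r l : ℕ) (hn : 0 < n) (hr : 2 ≤ r) (hl : 1 ≤ l)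
    (α β : Finset (HEdge n r))
    (hα : InTreeFam ⟨0, hn⟩ l α) (hβ : InTreeFam ⟨0, hn⟩ l β)
    (hne : α ≠ β) (hshare : (α ∩ β).Nonempty)
    (hb : (vset ((α \ β) ∪ (β \ α)) ∩ coreVset ⟨0, hn⟩ (α ∩ β)).card = 1) :
    l ≤ (α ∩ β).card := by
  obtain ⟨hαtree, e₁, e₂, T₁, T₂, hαeq, he12, he1T, he2T, hdT, hT1, hT2, hc1,
    hc2, hr1, hr2, hint, hrv1, hrv2, hdv, hm1, hz1, hm2, hz2⟩ := hα
  have hr0 : 0 < r := lt_of_lt_of_le two_pos hr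
  have hm1' : (e₁.1 ∩ vset T₁).Nonempty := Finset.card_pos.mp (by rw [hm1]; exact one_pos)
  have hm2' : (e₂.1 ∩ vset T₂).Nonempty := Finset.card_pos.mp (by rw [hm2]; exact one_pos)
  have hs1 : insert e₁ T₁ ⊆ α := by
    intro x hx; rw [hαeq]
    simp only [Finset.mem_insert, Finset.mem_union] at hx ⊢; tauto
  have hs2 : insert e₂ T₂ ⊆ α := by
    intro x hx; rw [hαeq]
    simp only [Finset.mem_insert, Finset.mem_union] at hx ⊢; tauto
  by_cases hc₁ : T₁ ⊆ β
  · have hsub : T₁ ⊆ α ∩ β := fun x hx =>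
      Finset.mem_inter.mpr ⟨hs1 (Finset.mem_insert.mpr (Or.inr hx)), hc₁ hx⟩
    exact le_of_eq_of_le hc1.symm (Finset.card_le_card hsub)
  by_cases hc₂ : T₂ ⊆ β
  · have hsub : T₂ ⊆ α ∩ β := fun x hx =>
      Finset.mem_inter.mpr ⟨hs2 (Finset.mem_insert.mpr (Or.inr hx)), hc₂ hx⟩
    exact le_of_eq_of_le hc2.symm (Finset.card_le_card hsub)
  obtain ⟨g₁, hg1, hg1β⟩ := Finset.not_subset.mp hc₁
  obtain ⟨g₂, hg2, hg2β⟩ := Finset.not_subset.mp hc₂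
  obtain ⟨h, hhαβ⟩ := hshare
  have hhα := (Finset.mem_inter.mp hhαβ).1
  have hhβ := (Finset.mem_inter.mp hhαβ).2
  have hside : h ∈ insert e₁ T₁ ∨ h ∈ insert e₂ T₂ := by
    rw [hαeq] at hhα
    simp only [Finset.mem_insert, Finset.mem_union] at hhα ⊢; tauto
  rcases hside with hh | hh
  · exact (main_aux hr0 _ hb hT1 hT2 hm1' hm2' hs1 hs2 hr2 hrv1 hdv hh hhβ
      hg1 hg1β hg2 hg2β).elim
  · exact (main_aux hr0 _ hb hT2 hT1 hm2' hm1' hs2 hs1 hr1 hrv2 hdv.symm hh hhβ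
      hg2 hg2β hg1 hg1β).elim
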